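/- Let (M,χ) be a module of the system with structure function φ(A) = ψ((A∖M) ∪ S), S = {[M]} if χ(A∩M)=1 and S = ∅ otherwise. Then for every j ∈ M, every A ⊆ M∖{j}, and every B ⊆ C∖M, one has Δ_jφ(A∪B) = Δ_[M]ψ(B) · Δ_jχ(A). -/
import Mathlib


open Finset

/- A subset of the reduced component set `C_M = (C∖M) ∪ {[M]}` is encoded as a pair
consisting of a `Finset (Fin n)` (its part in `C∖M`) and a `Bool` recording whether the
macro-component `[M]` belongs to it; the organizing structure is `ψ : Finset (Fin n) → Bool → ℝ`,
and `Δ_[M]ψ(B) = ψ B true - ψ B false`. -/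
theorem stmt_16 {n : ℕ} (φ : Finset (Fin n) → ℝ)
    (hφ01 : ∀ A, φ A = 0 ∨ φ A = 1)
    (hφmono : ∀ A B : Finset (Fin n), A ⊆ B → φ A ≤ φ B)
    (hφempty : φ ∅ = 0) (hφfull : φ Finset.univ = 1)
    (M : Finset (Fin n)) (hM : M.Nonempty)
    (χ : Finset (Fin n) → ℝ) (ψ : Finset (Fin n) → Bool → ℝ)
    (hχ01 : ∀ A, A ⊆ M → χ A = 0 ∨ χ A = 1)
    (hχmono : ∀ A B : Finset (Fin n), A ⊆ B → B ⊆ M → χ A ≤ χ B)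
    (hχempty : χ ∅ = 0) (hχfull : χ M = 1)
    (hψ01 : ∀ B b, B ⊆ Finset.univ \ M → ψ B b = 0 ∨ ψ B b = 1)
    (hψmono : ∀ (B B' : Finset (Fin n)) (b b' : Bool), B ⊆ B' → B' ⊆ Finset.univ \ M →
      (b = true → b' = true) → ψ B b ≤ ψ B' b')
    (hψempty : ψ ∅ false = 0) (hψfull : ψ (Finset.univ \ M) true = 1)
    (hmod : ∀ A : Finset (Fin n),
      φ A = ψ (A \ M) (if χ (A ∩ M) = 1 then true else false)) :
    ∀ j ∈ M, ∀ A ⊆ M \ {j}, ∀ B ⊆ Finset.univ \ M,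
      φ (insert j (A ∪ B)) - φ (A ∪ B) =
        (ψ B true - ψ B false) * (χ (insert j A) - χ A) := by
  intro j hj A hA B hB
  have hAM : A ⊆ M := hA.trans sdiff_subset
  have hBM : ∀ x ∈ B, x ∉ M := by
    intro x hx
    have := hB hx
    simp only [mem_sdiff, mem_univ, true_and] at this
    exact this
  have h1 : (A ∪ B) \ M = B := by
    ext x
    simp only [mem_sdiff, mem_union]
    constructor
    · rintro ⟨h | h, hm⟩
      · exact absurd (hAM h) hm
      · exact h
    · intro h; exact ⟨Or.inr h, hBM x h⟩
  have h2 : insert j (A ∪ B) \ M = B := by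
    ext x
    simp only [mem_sdiff, mem_insert, mem_union]
    constructor
    · rintro ⟨h | h | h, hm⟩
      · subst h; exact absurd hj hm
      · exact absurd (hAM h) hm
      · exact h
    · intro h; exact ⟨Or.inr (Or.inr h), hBM x h⟩
  have h3 : (A ∪ B) ∩ M = A := by
    ext x
    simp only [mem_inter, mem_union]
    constructor
    · rintro ⟨h | h, hm⟩
      · exact h
      · exact absurd hm (hBM x h)
    · intro h; exact ⟨Or.inl h, hAM h⟩
  have h4 : insert j (A ∪ B) ∩ M = insert j A := by
    ext x
    simp only [mem_inter, mem_insert, mem_union]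
    constructor
    · rintro ⟨h | h | h, hm⟩
      · exact Or.inl h
      · exact Or.inr h
      · exact absurd hm (hBM x h)
    · rintro (h | h)
      · subst h; exact ⟨Or.inl rfl, hj⟩
      · exact ⟨Or.inr (Or.inl h), hAM h⟩
  have hjA : insert j A ⊆ M := by
    intro x hx
    rcases mem_insert.mp hx with h | h
    · subst h; exact hj
    · exact hAM h
  rw [hmod (A ∪ B), hmod (insert j (A ∪ B)), h1, h2, h3, h4]
  have hle : χ A ≤ χ (insert j A) := hχmono A (insert j A) (subset_insert j A) hjA
  rcases hχ01 A hAM with hA0 | hA1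
  · rcases hχ01 (insert j A) hjA with hj0 | hj1
    · rw [hA0, hj0]; norm_num
    · rw [hA0, hj1]; norm_num
  · rcases hχ01 (insert j A) hjA with hj0 | hj1
    · exfalso; rw [hA1, hj0] at hle; linarith
    · rw [hA1, hj1]; norm_num
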